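/- Let V be a vector space over F_q (q > 7, q odd) with a nondegenerate symmetric bilinear form, let l and m be elliptic 2-dimensional subspaces with ⟨l, m⟩ of dimension 4 and with a 1-dimensional radical ⟨x⟩ = rad⟨l,m⟩. Let s = ⟨l,x⟩ ∩ ⟨m,x⟩, y = l ∩ s, z = m ∩ s. Then every 2-dimensional subspace of ⟨l,x⟩ through z other than s is elliptic, and for every 1-dimensional subspace ⟨p⟩ ≤ l with p ∉ s, the 3-dimensional subspace ⟨p, m⟩ is nondegenerate. -/

import Mathlib

open Module

/-- The radical of a subspace `W` with respect to a bilinear form `B`: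
`rad(W) = W ∩ W^⊥`. -/
def bilinRadical {F V : Type*} [Field F] [AddCommGroup V] [Module F V]
    (B : LinearMap.BilinForm F V) (W : Submodule F V) : Submodule F V :=
  W ⊓ B.orthogonal W

/-- A subspace `W` is an *elliptic line* for `B` if it is 2-dimensional,
nondegenerate and anisotropic. -/
def IsEllipticLine {F V : Type*} [Field F] [AddCommGroup V] [Module F V]
    (B : LinearMap.BilinForm F V) (W : Submodule F V) : Prop :=
  finrank F W = 2 ∧ (B.restrict W).Nondegenerate ∧ ∀ v ∈ W, B v v = 0 → v = 0

/-- Over `F_q` (`q > 7` odd): let `l`, `m` be elliptic lines with `⟨l,m⟩` of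
dimension 4 and 1-dimensional radical `⟨x⟩`, and let `s = ⟨l,x⟩ ∩ ⟨m,x⟩`,
`z = m ∩ s`.  Then every 2-dimensional subspace of `⟨l,x⟩` through `z` other than `s`
is elliptic, and for every point `⟨p⟩ ≤ l` with `p ∉ s`, the 3-space `⟨p,m⟩` is
nondegenerate. -/
theorem elliptic_lines_degenerate_four_space
    {F V : Type*} [Field F] [Fintype F] [AddCommGroup V] [Module F V]
    (q : ℕ) (hq : Fintype.card F = q) (hodd : Odd q) (hq7 : 7 < q)
    (B : LinearMap.BilinForm F V) (hsymm : B.IsSymm) (hB : B.Nondegenerate)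
    (l m : Submodule F V) (hl : IsEllipticLine B l) (hm : IsEllipticLine B m)
    (h4 : finrank F (l ⊔ m : Submodule F V) = 4)
    (x : V) (hx : x ≠ 0) (hrad : bilinRadical B (l ⊔ m) = Submodule.span F {x}) :
    (∀ U : Submodule F V, U ≤ l ⊔ Submodule.span F {x} → finrank F U = 2 →
      m ⊓ ((l ⊔ Submodule.span F {x}) ⊓ (m ⊔ Submodule.span F {x})) ≤ U →
      U ≠ (l ⊔ Submodule.span F {x}) ⊓ (m ⊔ Submodule.span F {x}) →
      IsEllipticLine B U) ∧
    (∀ p : V, p ∈ l → p ∉ (l ⊔ Submodule.span F {x}) ⊓ (m ⊔ Submodule.span F {x}) →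
      finrank F (Submodule.span F {p} ⊔ m : Submodule F V) = 3 ∧
      (B.restrict (Submodule.span F {p} ⊔ m)).Nondegenerate) := by
  set X : Submodule F V := Submodule.span F {x} with hX
  set L : Submodule F V := l ⊔ X with hL
  set M : Submodule F V := m ⊔ X with hM
  set s : Submodule F V := L ⊓ M with hs
  -- basic membership of x in the radical
  have hxrad : x ∈ bilinRadical B (l ⊔ m) := by
    rw [hrad]; exact Submodule.mem_span_singleton_self x
  have hxlm : x ∈ l ⊔ m := hxrad.1
  have hOrth : ∀ n ∈ l ⊔ m, B n x = 0 := by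
    intro n hn
    exact (LinearMap.BilinForm.mem_orthogonal_iff.mp hxrad.2) n hn
  have hsymm' : ∀ a b : V, B a b = B b a := by
    intro a b
    have := hsymm.eq a b
    simpa using this
  have hsmulmem : ∀ (W : Submodule F V) (v : V) (c : F), c ≠ 0 → c • v ∈ W → v ∈ W := by
    intro W v c hc h
    simpa [smul_smul, inv_mul_cancel₀ hc] using W.smul_mem c⁻¹ h
  have hOrth' : ∀ n ∈ l ⊔ m, B x n = 0 := by
    intro n hn
    rw [hsymm' x n]; exact hOrth n hn
  have hBxx : B x x = 0 := hOrth x hxlm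
  -- x is in neither l nor m (anisotropy)
  have hxl : x ∉ l := fun h => hx (hl.2.2 x h hBxx)
  have hxm : x ∉ m := fun h => hx (hm.2.2 x h hBxx)
  -- finite dimensionality
  haveI hfinlm : FiniteDimensional F (l ⊔ m : Submodule F V) :=
    FiniteDimensional.of_finrank_pos (by rw [h4]; norm_num)
  have hllm : l ≤ l ⊔ m := le_sup_left
  have hmlm : m ≤ l ⊔ m := le_sup_right
  have hXlm : X ≤ l ⊔ m := by
    rw [hX, Submodule.span_le, Set.singleton_subset_iff]; exact hxlm
  have hLlm : L ≤ l ⊔ m := sup_le hllm hXlm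
  have hMlm : M ≤ l ⊔ m := sup_le hmlm hXlm
  haveI : FiniteDimensional F l := Submodule.finiteDimensional_of_le hllm
  haveI : FiniteDimensional F m := Submodule.finiteDimensional_of_le hmlm
  haveI : FiniteDimensional F X := Submodule.finiteDimensional_of_le hXlm
  haveI : FiniteDimensional F L := Submodule.finiteDimensional_of_le hLlm
  haveI : FiniteDimensional F M := Submodule.finiteDimensional_of_le hMlm
  haveI : FiniteDimensional F s := Submodule.finiteDimensional_of_le (inf_le_left.trans hLlm)
  have hdimX : finrank F X = 1 := finrank_span_singleton hx
  -- if a line span{x} intersects a subspace not containing x, intersection is ⊥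
  have hlinebot : ∀ (W : Submodule F V), x ∉ W → W ⊓ X = ⊥ := by
    intro W hxW
    rw [eq_bot_iff]
    rintro v ⟨hv1, hv2⟩
    obtain ⟨c, rfl⟩ := Submodule.mem_span_singleton.mp hv2
    rcases eq_or_ne c 0 with rfl | hc
    · simp
    · exact absurd (by simpa [hc] using W.smul_mem c⁻¹ hv1) hxW
  have hdimL : finrank F L = 3 := by
    have := Submodule.finrank_sup_add_finrank_inf_eq l X
    rw [hlinebot l hxl] at this
    simp only [finrank_bot, add_zero] at this
    rw [hL, this, hl.1, hdimX]
  have hdimM : finrank F M = 3 := by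
    have := Submodule.finrank_sup_add_finrank_inf_eq m X
    rw [hlinebot m hxm] at this
    simp only [finrank_bot, add_zero] at this
    rw [hM, this, hm.1, hdimX]
  have hLM : L ⊔ M = l ⊔ m := by
    apply le_antisymm (sup_le hLlm hMlm)
    exact sup_le (le_sup_left.trans le_sup_left) (le_sup_left.trans le_sup_right)
  have hdims : finrank F s = 2 := by
    have h := Submodule.finrank_sup_add_finrank_inf_eq L M
    rw [hLM, h4, hdimL, hdimM] at h
    rw [← hs] at h
    omega
  have hxs : x ∈ s := ⟨Submodule.mem_sup_right (Submodule.mem_span_singleton_self x),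
    Submodule.mem_sup_right (Submodule.mem_span_singleton_self x)⟩
  -- m ⊔ s = M and l ⊔ s = L, giving 1-dimensional intersections
  have hms : m ⊔ s = M := by
    apply le_antisymm (sup_le le_sup_left inf_le_right)
    exact sup_le le_sup_left (by
      rw [hX, Submodule.span_le, Set.singleton_subset_iff]
      exact Submodule.mem_sup_right hxs)
  have hls : l ⊔ s = L := by
    apply le_antisymm (sup_le le_sup_left inf_le_left)
    exact sup_le le_sup_left (by
      rw [hX, Submodule.span_le, Set.singleton_subset_iff]
      exact Submodule.mem_sup_right hxs)
  have hdimms : finrank F (m ⊓ s : Submodule F V) = 1 := by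
    have h := Submodule.finrank_sup_add_finrank_inf_eq m s
    rw [hms, hdimM, hm.1, hdims] at h
    omega
  have hdimls : finrank F (l ⊓ s : Submodule F V) = 1 := by
    have h := Submodule.finrank_sup_add_finrank_inf_eq l s
    rw [hls, hdimL, hl.1, hdims] at h
    omega
  -- decomposition computation: if u = w + c•x with w ∈ l ⊔ m then B u u = B w w
  have hBuu : ∀ (w : V), w ∈ l ⊔ m → ∀ (c : F), B (w + c • x) (w + c • x) = B w w := by
    intro w hw c
    simp only [map_add, map_smul, LinearMap.add_apply, LinearMap.smul_apply,
      hOrth w hw, hOrth' w hw, hBxx, smul_zero, add_zero, smul_eq_mul, mul_zero]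
  constructor
  · -- Part 1
    intro U hUL hU2 hzU hUs
    haveI : FiniteDimensional F U := Submodule.finiteDimensional_of_le (hUL.trans hLlm)
    -- first: x ∉ U
    have hxU : x ∉ U := by
      intro hxU
      -- pick a nonzero z₀ ∈ m ⊓ s
      have hne : (m ⊓ s : Submodule F V) ≠ ⊥ := by
        intro hbot
        rw [hbot, finrank_bot] at hdimms; omega
      obtain ⟨z₀, hz₀mem, hz₀⟩ := Submodule.exists_mem_ne_zero_of_ne_bot hne
      have hz₀m : z₀ ∈ m := hz₀mem.1
      have hz₀s : z₀ ∈ s := hz₀mem.2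
      have hz₀U : z₀ ∈ U := hzU hz₀mem
      -- span {x, z₀} ≤ U and ≤ s, both of dimension 2, so U = s
      have hsub : Submodule.span F {x, z₀} ≤ U := by
        rw [Submodule.span_le]
        rintro v (rfl | rfl)
        · exact hxU
        · exact hz₀U
      have hsubs : Submodule.span F {x, z₀} ≤ s := by
        rw [Submodule.span_le]
        rintro v (rfl | rfl)
        · exact hxs
        · exact hz₀s
      have hz₀X : z₀ ∉ X := by
        intro h
        obtain ⟨c, rfl⟩ := Submodule.mem_span_singleton.mp h
        rcases eq_or_ne c 0 with rfl | hc
        · simp at hz₀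
        · exact hxm (hsmulmem m x c hc hz₀m)
      have hdim2 : finrank F (Submodule.span F {x, z₀} : Submodule F V) = 2 := by
        rw [show ({x, z₀} : Set V) = {x} ∪ {z₀} by rfl, Submodule.span_union]
        have hbot : Submodule.span F {x} ⊓ Submodule.span F {z₀} = ⊥ := by
          rw [eq_bot_iff]
          rintro v ⟨hv1, hv2⟩
          obtain ⟨c, rfl⟩ := Submodule.mem_span_singleton.mp hv2
          rcases eq_or_ne c 0 with rfl | hc
          · simp
          · exact absurd (hsmulmem (Submodule.span F {x}) z₀ c hc (by
              rw [Submodule.mem_span_singleton]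
              obtain ⟨d, hd⟩ := Submodule.mem_span_singleton.mp hv1
              exact ⟨d, hd⟩))
              (fun h => hz₀X (by
                obtain ⟨d, hd⟩ := Submodule.mem_span_singleton.mp h
                exact Submodule.mem_span_singleton.mpr ⟨d, hd⟩))
        haveI : FiniteDimensional F (Submodule.span F {z₀} : Submodule F V) :=
          Submodule.finiteDimensional_of_le
            ((Submodule.span_le.mpr (Set.singleton_subset_iff.mpr (hmlm hz₀m))))
        have h := Submodule.finrank_sup_add_finrank_inf_eq (Submodule.span F {x})
          (Submodule.span F {z₀})
        rw [hbot, finrank_bot, hdimX, finrank_span_singleton hz₀] at h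
        omega
      have hUeq : U = Submodule.span F {x, z₀} := by
        symm
        exact Submodule.eq_of_le_of_finrank_le hsub (by rw [hU2, hdim2])
      have hseq : s = Submodule.span F {x, z₀} := by
        symm
        exact Submodule.eq_of_le_of_finrank_le hsubs (by rw [hdims, hdim2])
      exact hUs (hUeq.trans hseq.symm)
    -- anisotropy of U
    have haniso : ∀ v ∈ U, B v v = 0 → v = 0 := by
      intro v hvU hBvv
      obtain ⟨w, hw, xv, hxv, rfl⟩ := Submodule.mem_sup.mp (hUL hvU)
      obtain ⟨c, rfl⟩ := Submodule.mem_span_singleton.mp hxv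
      rw [hBuu w (hllm hw) c] at hBvv
      have hw0 : w = 0 := hl.2.2 w hw hBvv
      subst hw0
      rcases eq_or_ne c 0 with rfl | hc
      · simp
      · exact absurd (hsmulmem U x c hc (by simpa using hvU)) hxU
    refine ⟨hU2, ?_, haniso⟩
    refine (LinearMap.IsRefl.nondegenerate_iff_separatingLeft (B := B.restrict U) (by
      intro a b h; change B (a : V) b = 0 at h; change B (b : V) a = 0; rw [hsymm']; exact h)).mpr ?_
    intro u hu
    have := hu u
    have h0 : B (u : V) (u : V) = 0 := this
    exact Subtype.ext (haniso u u.2 h0)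
  · -- Part 2
    intro p hpl hps
    have hp0 : p ≠ 0 := fun h => hps (h ▸ s.zero_mem)
    have hpm : p ∉ m := fun h => hps ⟨Submodule.mem_sup_left hpl, Submodule.mem_sup_left h⟩
    set P : Submodule F V := Submodule.span F {p} with hP
    set W : Submodule F V := P ⊔ m with hW
    have hPl : P ≤ l := Submodule.span_le.mpr (Set.singleton_subset_iff.mpr hpl)
    have hWlm : W ≤ l ⊔ m := sup_le (hPl.trans hllm) hmlm
    haveI : FiniteDimensional F W := Submodule.finiteDimensional_of_le hWlm
    haveI : FiniteDimensional F P := Submodule.finiteDimensional_of_le (hPl.trans hllm)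
    have hPm : P ⊓ m = ⊥ := by
      rw [eq_bot_iff]
      rintro v ⟨hv1, hv2⟩
      obtain ⟨c, rfl⟩ := Submodule.mem_span_singleton.mp hv1
      rcases eq_or_ne c 0 with rfl | hc
      · simp
      · exact absurd (hsmulmem m p c hc hv2) hpm
    have hdimW : finrank F W = 3 := by
      have h := Submodule.finrank_sup_add_finrank_inf_eq P m
      rw [hPm, finrank_bot, finrank_span_singleton hp0, hm.1, ← hW] at h
      omega
    refine ⟨hdimW, ?_⟩
    -- x ∉ W
    have hxW : x ∉ W := by
      intro hxW
      have hMW : M ≤ W := sup_le le_sup_right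
        (Submodule.span_le.mpr (Set.singleton_subset_iff.mpr hxW))
      have : M = W := Submodule.eq_of_le_of_finrank_le hMW (by rw [hdimW, hdimM])
      have hpW : p ∈ W := Submodule.mem_sup_left (Submodule.mem_span_singleton_self p)
      exact hps ⟨Submodule.mem_sup_left hpl, this ▸ hpW⟩
    -- l = P ⊔ (l ⊓ s)
    have hlPs : l = P ⊔ (l ⊓ s) := by
      have hle : P ⊔ (l ⊓ s) ≤ l := sup_le hPl inf_le_left
      symm
      apply Submodule.eq_of_le_of_finrank_le hle
      have hPls : P ⊓ (l ⊓ s) = ⊥ := by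
        rw [eq_bot_iff]
        rintro v ⟨hv1, hv2⟩
        obtain ⟨c, rfl⟩ := Submodule.mem_span_singleton.mp hv1
        rcases eq_or_ne c 0 with rfl | hc
        · simp
        · exact absurd (hsmulmem s p c hc hv2.2) hps
      haveI : FiniteDimensional F (l ⊓ s : Submodule F V) :=
        Submodule.finiteDimensional_of_le (inf_le_left.trans hllm)
      have h := Submodule.finrank_sup_add_finrank_inf_eq P (l ⊓ s)
      rw [hPls, finrank_bot, finrank_span_singleton hp0, hdimls] at h
      rw [hl.1]
      omega
    -- nondegeneracy
    refine (LinearMap.IsRefl.nondegenerate_iff_separatingLeft (B := B.restrict W) (by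
      intro a b h; change B (a : V) b = 0 at h; change B (b : V) a = 0; rw [hsymm']; exact h)).mpr ?_
    intro u hu
    set u₀ : V := (u : V) with hu₀
    have hu₀W : u₀ ∈ W := u.2
    have huv : ∀ v ∈ W, B v u₀ = 0 := by
      intro v hv
      rw [hsymm' v u₀]
      exact hu ⟨v, hv⟩
    -- the kernel of B.flip u₀ contains l ⊔ m
    set K : Submodule F V := LinearMap.ker (B.flip u₀) with hK
    have hmemK : ∀ v : V, v ∈ K ↔ B v u₀ = 0 := fun v => LinearMap.mem_ker
    have hmK : m ≤ K := fun v hv => (hmemK v).mpr (huv v (Submodule.mem_sup_right hv))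
    have hPK : P ≤ K := fun v hv => (hmemK v).mpr (huv v (Submodule.mem_sup_left hv))
    have hXK : X ≤ K := by
      rw [hX, Submodule.span_le, Set.singleton_subset_iff, SetLike.mem_coe, hmemK]
      exact hOrth' u₀ (hWlm hu₀W)
    have hMK : M ≤ K := sup_le hmK hXK
    have hlK : l ≤ K := by
      rw [hlPs]
      exact sup_le hPK ((inf_le_right.trans inf_le_right).trans hMK)
    have hlmK : l ⊔ m ≤ K := sup_le hlK hmK
    -- hence u₀ is in the radical, so u₀ ∈ span{x}, but x ∉ W
    have hu₀rad : u₀ ∈ bilinRadical B (l ⊔ m) := by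
      have horth : u₀ ∈ B.orthogonal (l ⊔ m) := by
        rw [LinearMap.BilinForm.mem_orthogonal_iff]
        intro n hn
        exact (hmemK n).mp (hlmK hn)
      exact Submodule.mem_inf.mpr ⟨hWlm hu₀W, horth⟩
    rw [hrad] at hu₀rad
    obtain ⟨c, hc⟩ := Submodule.mem_span_singleton.mp hu₀rad
    rcases eq_or_ne c 0 with rfl | hcne
    · apply Subtype.ext
      show u₀ = ((0 : W) : V)
      rw [← hc, zero_smul]
      rfl
    · exfalso
      apply hxW
      exact hsmulmem W x c hcne (hc ▸ hu₀W)
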